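/- arXiv:1011.1570 — 5 statements merged into one kernel-verified Lean document; each statement's English description precedes it below -/
import Mathlib

section
/- Let n ≥ 2 be an integer and let a₁, …, aₙ be nonnegative real numbers. Then (∏_{i=1}^n a_i)^{1/n} ≤ (1/n)·∑_{i=1}^n a_i − (1/(n(n−1)))·∑_{1 ≤ i < j ≤ n} (√a_i − √a_j)². -/
open Finset

/-- Quantitative arithmetic–geometric mean inequality: for `n ≥ 2` nonnegative reals,
`(∏ aᵢ)^{1/n} ≤ (1/n)·∑ aᵢ − (1/(n(n−1)))·∑_{i<j} (√aᵢ − √aⱼ)²`. -/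
theorem quantitative_am_gm (n : ℕ) (hn : 2 ≤ n) (a : Fin n → ℝ) (ha : ∀ i, 0 ≤ a i) :
    (∏ i, a i) ^ ((1 : ℝ) / n) ≤
      (1 / (n : ℝ)) * ∑ i, a i -
        (1 / ((n : ℝ) * ((n : ℝ) - 1))) *
          ∑ i, ∑ j, (if i < j then (Real.sqrt (a i) - Real.sqrt (a j)) ^ 2 else 0) := by
  set b : Fin n → ℝ := fun i => Real.sqrt (a i) with hb
  have hb0 : ∀ i, 0 ≤ b i := fun i => Real.sqrt_nonneg _
  have hba : ∀ i, b i ^ 2 = a i := fun i => Real.sq_sqrt (ha i)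
  have hn2 : (2:ℝ) ≤ (n:ℝ) := by exact_mod_cast hn
  have hn0 : (0:ℝ) < (n:ℝ) := by linarith
  have hn1 : (0:ℝ) < (n:ℝ) - 1 := by linarith
  set A := ∑ i, a i with hA
  set B := ∑ i, b i with hB
  set T := ∑ i, ∑ j, (if i < j then (b i - b j) ^ 2 else 0) with hT
  -- full symmetric sum equals 2T
  have key : ∀ i j : Fin n, (b i - b j)^2 =
      (if i < j then (b i - b j)^2 else 0) + (if j < i then (b i - b j)^2 else 0)
        + (if i = j then (b i - b j)^2 else 0) := by
    intro i j
    rcases lt_trichotomy i j with h | h | h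
    · simp [h, asymm h, h.ne]
    · subst h; simp
    · simp [h, asymm h, h.ne']
  have hswap : ∑ i, ∑ j, (if j < i then (b i - b j)^2 else 0) = T := by
    rw [Finset.sum_comm, hT]
    refine Finset.sum_congr rfl fun i _ => Finset.sum_congr rfl fun j _ => ?_
    have : (b j - b i)^2 = (b i - b j)^2 := by ring
    rw [this]
  have hdiag0 : ∑ i : Fin n, ∑ j, (if i = j then (b i - b j)^2 else 0) = 0 := by
    refine Finset.sum_eq_zero fun i _ => ?_
    rw [Finset.sum_ite_eq (Finset.univ) i (fun j => (b i - b j)^2)]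
    simp
  have hfull : ∑ i, ∑ j, (b i - b j)^2 = 2 * T := by
    calc ∑ i, ∑ j, (b i - b j)^2
        = ∑ i, ∑ j, ((if i < j then (b i - b j)^2 else 0)
            + (if j < i then (b i - b j)^2 else 0)
            + (if i = j then (b i - b j)^2 else 0)) := by
          exact Finset.sum_congr rfl fun i _ => Finset.sum_congr rfl fun j _ => key i j
      _ = T + T + 0 := by
          simp only [Finset.sum_add_distrib]
          rw [hswap, hdiag0, hT]
      _ = 2 * T := by ring
  -- expand the full sum
  have hexp : ∑ i, ∑ j, (b i - b j)^2 = 2 * (n:ℝ) * A - 2 * B^2 := by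
    have h1 : ∀ i, ∑ j, (b i - b j)^2 = (n:ℝ) * b i ^2 - 2 * b i * B + A := by
      intro i
      have : ∀ j, (b i - b j)^2 = b i ^2 - 2 * (b i * b j) + b j^2 := fun j => by ring
      rw [Finset.sum_congr rfl fun j _ => this j]
      rw [Finset.sum_add_distrib, Finset.sum_sub_distrib, ← Finset.mul_sum,
        Finset.sum_const, Finset.card_univ, Fintype.card_fin]
      have : ∑ j, b j ^2 = A := by rw [hA]; exact Finset.sum_congr rfl fun j _ => hba j
      rw [this, ← Finset.mul_sum, ← hB, nsmul_eq_mul]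
      ring
    rw [Finset.sum_congr rfl fun i _ => h1 i, Finset.sum_add_distrib,
      Finset.sum_sub_distrib, Finset.sum_const, Finset.card_univ, Fintype.card_fin,
      ← Finset.mul_sum]
    have h2 : ∑ i, b i ^2 = A := by rw [hA]; exact Finset.sum_congr rfl fun i _ => hba i
    have h3 : ∑ i, 2 * b i * B = 2 * B^2 := by
      rw [← Finset.sum_mul, ← Finset.mul_sum, ← hB]; ring
    rw [h2, h3, nsmul_eq_mul]
    ring
  have hTval : T = (n:ℝ) * A - B^2 := by
    have := hfull.symm.trans hexp
    linarith
  -- off-diagonal sum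
  have hoff : ∑ p ∈ (Finset.univ : Finset (Fin n)).offDiag, b p.1 * b p.2 = B^2 - A := by
    have hsq : ∑ p ∈ (Finset.univ ×ˢ Finset.univ : Finset (Fin n × Fin n)), b p.1 * b p.2
        = B^2 := by
      rw [Finset.sum_product]
      rw [hB, sq, Finset.sum_mul_sum]
    rw [← Finset.diag_union_offDiag (Finset.univ : Finset (Fin n)),
      Finset.sum_union (Finset.disjoint_diag_offDiag _)] at hsq
    have hd : ∑ p ∈ (Finset.univ : Finset (Fin n)).diag, b p.1 * b p.2 = A := by
      rw [Finset.sum_diag, hA]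
      exact Finset.sum_congr rfl fun i _ => by rw [← hba i]; ring
    rw [hd] at hsq
    linarith
  -- rewrite RHS
  have hrhs : (1 / (n : ℝ)) * A - (1 / ((n : ℝ) * ((n : ℝ) - 1))) * T
      = (1 / ((n : ℝ) * ((n : ℝ) - 1))) *
          ∑ p ∈ (Finset.univ : Finset (Fin n)).offDiag, b p.1 * b p.2 := by
    rw [hoff, hTval]
    field_simp
    ring
  rw [show (1 / (n : ℝ)) * ∑ i, a i -
        (1 / ((n : ℝ) * ((n : ℝ) - 1))) *
          ∑ i, ∑ j, (if i < j then (Real.sqrt (a i) - Real.sqrt (a j)) ^ 2 else 0)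
      = (1 / (n : ℝ)) * A - (1 / ((n : ℝ) * ((n : ℝ) - 1))) * T from rfl, hrhs]
  -- now prove the AM-GM step
  set s := (Finset.univ : Finset (Fin n)).offDiag with hs
  set w : ℝ := 1 / ((n : ℝ) * ((n : ℝ) - 1)) with hw
  have hw0 : 0 ≤ w := by positivity
  have hcard : (s.card : ℝ) = (n:ℝ) * ((n:ℝ) - 1) := by
    rw [hs, Finset.offDiag_card, Finset.card_univ, Fintype.card_fin]
    have hle : n ≤ n * n := Nat.le_mul_of_pos_left n (by omega)
    push_cast [Nat.cast_sub hle]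
    ring
  have hwsum : ∑ _p ∈ s, w = 1 := by
    rw [Finset.sum_const, nsmul_eq_mul, hcard, hw]
    field_simp
  have hz0 : ∀ p ∈ s, 0 ≤ b p.1 * b p.2 := fun p _ => mul_nonneg (hb0 _) (hb0 _)
  have hamgm := Real.geom_mean_le_arith_mean_weighted s (fun _ => w)
    (fun p => b p.1 * b p.2) (fun p _ => hw0) hwsum hz0
  have hsum : ∑ p ∈ s, w * (b p.1 * b p.2) = w * ∑ p ∈ s, b p.1 * b p.2 :=
    (Finset.mul_sum _ _ _).symm
  rw [hsum] at hamgm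
  refine le_trans ?_ hamgm
  -- compute the geometric mean product
  by_cases hzero : ∃ i, a i = 0
  · obtain ⟨i, hi⟩ := hzero
    have : ∏ i, a i = 0 := Finset.prod_eq_zero (Finset.mem_univ i) hi
    rw [this, Real.zero_rpow (by positivity)]
    exact Finset.prod_nonneg fun p hp => Real.rpow_nonneg (hz0 p hp) _
  · push_neg at hzero
    have hpos : ∀ i, 0 < a i := fun i => (ha i).lt_of_ne' (hzero i)
    have hQ : 0 < ∏ i, a i := Finset.prod_pos fun i _ => hpos i
    set Q := ∏ i, a i with hQdef
    have hbpos : ∀ i, 0 < b i := fun i => Real.sqrt_pos.2 (hpos i)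
    have hP : (∏ i, b i)^2 = Q := by
      rw [← Finset.prod_pow]
      exact Finset.prod_congr rfl fun i _ => hba i
    have hprodsq : ∏ p ∈ (Finset.univ ×ˢ Finset.univ : Finset (Fin n × Fin n)),
        (b p.1 * b p.2) = Q ^ n := by
      rw [Finset.prod_product]
      have : ∀ i, ∏ j, (b i * b j) = b i ^ n * ∏ j, b j := fun i => by
        rw [Finset.prod_mul_distrib, Finset.prod_const, Finset.card_univ, Fintype.card_fin]
      rw [Finset.prod_congr rfl fun i _ => this i, Finset.prod_mul_distrib,
        Finset.prod_pow, Finset.prod_const, Finset.card_univ, Fintype.card_fin]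
      rw [← hP]
      ring
    have hproddiag : ∏ p ∈ (Finset.univ : Finset (Fin n)).diag, (b p.1 * b p.2) = Q := by
      rw [Finset.prod_diag, hQdef]
      exact Finset.prod_congr rfl fun i _ => by rw [← hba i]; ring
    have hprodoff : ∏ p ∈ s, (b p.1 * b p.2) = Q ^ (n - 1) := by
      rw [← Finset.diag_union_offDiag (Finset.univ : Finset (Fin n)),
        Finset.prod_union (Finset.disjoint_diag_offDiag _), hproddiag, ← hs] at hprodsq
      have hstep : Q ^ n = Q * Q ^ (n - 1) := by
        rw [← pow_succ']
        congr 1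
        omega
      rw [hstep] at hprodsq
      exact mul_left_cancel₀ (ne_of_gt hQ) hprodsq
    have hprodrpow : ∏ p ∈ s, (b p.1 * b p.2) ^ w = Q ^ ((1:ℝ)/n) := by
      rw [Real.finset_prod_rpow s _ hz0 w, hprodoff, ← Real.rpow_natCast Q (n-1),
        ← Real.rpow_mul hQ.le]
      congr 1
      have : ((n - 1 : ℕ) : ℝ) = (n:ℝ) - 1 := by
        push_cast [Nat.cast_sub (by omega : 1 ≤ n)]; ring
      rw [this, hw]
      field_simp
    rw [← hprodrpow]
end

section
/- Let n ≥ 2 be an integer and let a₁, …, aₙ be real numbers with 0 ≤ a_i ≤ n for all i. Set m = (1/n)·∑_{i=1}^n a_i. Then for every index j ∈ {1, …, n}, (∏_{i=1}^n a_i)^{1/n} ≤ m − (1/(4n(n−1)))·(a_j − m)². -/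
open Finset

/-- Refined AM–GM inequality (display (j2) in the paper): if `0 ≤ aᵢ ≤ n` and
`m = (1/n)·∑ aᵢ`, then for every index `j`,
`(∏ aᵢ)^{1/n} ≤ m − (1/(4n(n−1)))·(aⱼ − m)²`. -/
theorem refined_am_gm (n : ℕ) (hn : 2 ≤ n) (a : Fin n → ℝ)
    (ha₀ : ∀ i, 0 ≤ a i) (ha₁ : ∀ i, a i ≤ n) (j : Fin n) :
    (∏ i, a i) ^ ((1 : ℝ) / n) ≤
      (1 / (n : ℝ)) * ∑ i, a i -
        (1 / (4 * (n : ℝ) * ((n : ℝ) - 1))) * (a j - (1 / (n : ℝ)) * ∑ i, a i) ^ 2 := by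
  have hN2 : (2:ℝ) ≤ (n:ℝ) := by exact_mod_cast hn
  have hN0 : (0:ℝ) < n := by linarith
  have hN1 : (0:ℝ) < (n:ℝ) - 1 := by linarith
  set t := a j with ht
  set P := ∏ i ∈ Finset.univ.erase j, a i with hPdef
  have hP0 : 0 ≤ P := Finset.prod_nonneg fun i _ => ha₀ i
  have ht0 : 0 ≤ t := ha₀ j
  have htn : t ≤ n := ha₁ j
  have hcardR : ((Finset.univ.erase j).card : ℝ) = (n:ℝ) - 1 := by
    rw [Finset.card_erase_of_mem (Finset.mem_univ j), Finset.card_univ, Fintype.card_fin]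
    push_cast [Nat.cast_sub (by omega : 1 ≤ n)]
    ring
  set s := (∑ i ∈ Finset.univ.erase j, a i) / ((n:ℝ) - 1) with hsdef
  have hsum0 : 0 ≤ ∑ i ∈ Finset.univ.erase j, a i := Finset.sum_nonneg fun i _ => ha₀ i
  have hs0 : 0 ≤ s := div_nonneg hsum0 hN1.le
  have hsn : s ≤ n := by
    rw [hsdef, div_le_iff₀ hN1]
    calc ∑ i ∈ Finset.univ.erase j, a i ≤ ∑ _i ∈ Finset.univ.erase j, (n:ℝ) :=
          Finset.sum_le_sum fun i _ => ha₁ i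
      _ = (n:ℝ) * ((n:ℝ) - 1) := by rw [Finset.sum_const, nsmul_eq_mul, hcardR]; ring
  have hsplit : ∑ i, a i = t + ((n:ℝ) - 1) * s := by
    rw [hsdef, mul_div_cancel₀ _ hN1.ne', ← Finset.add_sum_erase _ a (Finset.mem_univ j)]
  -- Step 1: AM-GM on the other n-1 terms
  have key1 : P ^ ((1:ℝ)/((n:ℝ)-1)) ≤ s := by
    have h := Real.geom_mean_le_arith_mean_weighted (Finset.univ.erase j)
      (fun _ => 1/((n:ℝ)-1)) a (fun i _ => by positivity)
      (by rw [Finset.sum_const, nsmul_eq_mul, hcardR]; field_simp)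
      (fun i _ => ha₀ i)
    rw [Real.finset_prod_rpow _ _ (fun i _ => ha₀ i)] at h
    calc P ^ ((1:ℝ)/((n:ℝ)-1)) ≤ ∑ i ∈ Finset.univ.erase j, (1/((n:ℝ)-1)) * a i := h
      _ = s := by rw [← Finset.mul_sum, hsdef]; ring
  -- rewrite the geometric mean
  have hprod : ∏ i, a i = t * P := (Finset.mul_prod_erase _ a (Finset.mem_univ j)).symm
  have hGM : (∏ i, a i) ^ ((1:ℝ)/n) ≤ t ^ ((1:ℝ)/n) * s ^ (((n:ℝ)-1)/n) := by
    rw [hprod, Real.mul_rpow ht0 hP0]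
    refine mul_le_mul_of_nonneg_left ?_ (Real.rpow_nonneg ht0 _)
    have hP : P ^ ((1:ℝ)/(n:ℝ)) = (P ^ ((1:ℝ)/((n:ℝ)-1))) ^ (((n:ℝ)-1)/n) := by
      rw [← Real.rpow_mul hP0]
      congr 1
      field_simp
    rw [hP]
    exact Real.rpow_le_rpow (Real.rpow_nonneg hP0 _) key1 (by positivity)
  set u := Real.sqrt (t * s) with hu
  have hu0 : 0 ≤ u := Real.sqrt_nonneg _
  have hu2 : u ^ 2 = t * s := Real.sq_sqrt (mul_nonneg ht0 hs0)
  have h2u : 2 * u ≤ t + s := by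
    nlinarith [sq_nonneg (Real.sqrt t - Real.sqrt s), Real.sq_sqrt ht0, Real.sq_sqrt hs0,
      Real.sqrt_mul ht0 s]
  have hun : u ≤ n := by nlinarith
  -- Step 2: two-term weighted AM-GM
  have key2 : t ^ ((1:ℝ)/n) * s ^ (((n:ℝ)-1)/n) ≤ (2/(n:ℝ)) * u + (((n:ℝ)-2)/n) * s := by
    have heq : t ^ ((1:ℝ)/n) * s ^ (((n:ℝ)-1)/n) = u ^ ((2:ℝ)/n) * s ^ (((n:ℝ)-2)/n) := by
      have h1 : u ^ ((2:ℝ)/n) = t ^ ((1:ℝ)/n) * s ^ ((1:ℝ)/n) := by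
        rw [hu, Real.sqrt_eq_rpow, ← Real.rpow_mul (mul_nonneg ht0 hs0),
          show (1:ℝ)/2 * (2/n) = 1/n by ring, Real.mul_rpow ht0 hs0]
      have h2 : s ^ (((n:ℝ)-1)/n) = s ^ ((1:ℝ)/n) * s ^ (((n:ℝ)-2)/n) := by
        rw [← Real.rpow_add_of_nonneg hs0 (by positivity) (div_nonneg (by linarith) hN0.le)]
        congr 1
        field_simp
        ring
      rw [h1, h2]
      ring
    rw [heq]
    exact Real.geom_mean_le_arith_mean2_weighted (by positivity)
      (div_nonneg (by linarith) hN0.le) hu0 hs0 (by field_simp; ring)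
  -- Step 3: final algebraic inequality
  have hkey : ((n:ℝ)-1)*(t-s)^2 ≤ 4*(n:ℝ)^2*(t+s-2*u) := by
    nlinarith [mul_nonneg (by linarith : (0:ℝ) ≤ t + s - 2*u)
        (by linarith : (0:ℝ) ≤ 4*(n:ℝ) - (t + s + 2*u)),
      mul_nonneg (by linarith : (0:ℝ) ≤ t + s - 2*u) hN1.le]
  have main : (2/(n:ℝ)) * u + (((n:ℝ)-2)/n) * s ≤
      (1/(n:ℝ)) * (t + ((n:ℝ)-1)*s) -
        (1/(4*(n:ℝ)*((n:ℝ)-1))) * (t - (1/(n:ℝ))*(t + ((n:ℝ)-1)*s))^2 := by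
    rw [← sub_nonneg]
    have heq2 : ((1/(n:ℝ)) * (t + ((n:ℝ)-1)*s) -
        (1/(4*(n:ℝ)*((n:ℝ)-1))) * (t - (1/(n:ℝ))*(t + ((n:ℝ)-1)*s))^2) -
        ((2/(n:ℝ))*u + (((n:ℝ)-2)/n)*s) =
        (4*(n:ℝ)^2*(t+s-2*u) - ((n:ℝ)-1)*(t-s)^2) / (4*(n:ℝ)^3) := by
      field_simp
      ring
    rw [heq2]
    apply div_nonneg (by linarith) (by positivity)
  rw [hsplit]
  calc (∏ i, a i) ^ ((1:ℝ)/n) ≤ t ^ ((1:ℝ)/n) * s ^ (((n:ℝ)-1)/n) := hGM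
    _ ≤ (2/(n:ℝ)) * u + (((n:ℝ)-2)/n) * s := key2
    _ ≤ _ := main
end

section
/- Let (Ω, μ) be a probability space, n ≥ 1 an integer, and V : Ω → ℝⁿ a measurable map with Euclidean norm ‖V(ω)‖ = 1 for μ-almost every ω. Let δ₁, …, δₙ be real-valued square-integrable functions on Ω that are orthonormal with respect to the inner product ⟨f, g⟩ := n·∫_Ω f·g dμ, i.e. n·∫_Ω δ_i·δ_j dμ equals 1 if i = j and 0 otherwise. Define the n×n matrix A by A_{ij} = n·∫_Ω δ_i(ω)·V_j(ω) dμ(ω), where V_j is the j-th coordinate of V. Then |det A| ≤ 1. -/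
open MeasureTheory

section Aux

open Matrix Finset

lemma trace_eq_sum_eig' {n : ℕ} {A : Matrix (Fin n) (Fin n) ℝ} (hA : A.IsHermitian) :
    A.trace = ∑ i, hA.eigenvalues i := by
  simpa using hA.trace_eq_sum_eigenvalues

lemma det_le_one_of_sum_sq' {n : ℕ} (hn : 1 ≤ n) (A : Matrix (Fin n) (Fin n) ℝ)
    (h : ∑ i, ∑ j, (A i j)^2 ≤ (n : ℝ)) : |A.det| ≤ 1 := by
  have hn0 : (n : ℝ) ≠ 0 := by positivity
  set B := Aᴴ * A with hB
  have hBsd : B.PosSemidef := Matrix.posSemidef_conjTranspose_mul_self A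
  have hH := hBsd.1
  have hev : ∀ i, 0 ≤ hH.eigenvalues i := hBsd.eigenvalues_nonneg
  have htr : B.trace = ∑ i, ∑ j, (A i j)^2 := by
    simp [hB, Matrix.trace, Matrix.diag, Matrix.mul_apply, Matrix.conjTranspose_apply, sq]
    rw [Finset.sum_comm]
  have hsum : ∑ i, hH.eigenvalues i ≤ (n : ℝ) := by
    rw [← trace_eq_sum_eig' hH, htr]; exact h
  have hamgm := Real.geom_mean_le_arith_mean_weighted Finset.univ
      (fun _ : Fin n => 1 / n) hH.eigenvalues
      (fun i _ => by positivity) (by simp [Finset.card_univ]; field_simp)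
      (fun i _ => hev i)
  have hgm : ∑ i, (1 / (n:ℝ)) * hH.eigenvalues i ≤ 1 := by
    rw [← Finset.mul_sum]
    rw [div_mul_eq_mul_div, one_mul, div_le_one (by positivity)]
    exact hsum
  have hprod : ∏ i, hH.eigenvalues i ≤ 1 := by
    have h1 : (∏ i, hH.eigenvalues i ^ (1 / (n:ℝ))) ^ (n : ℕ) = ∏ i, hH.eigenvalues i := by
      rw [← Finset.prod_pow]
      refine Finset.prod_congr rfl fun i _ => ?_
      rw [← Real.rpow_natCast (hH.eigenvalues i ^ (1/(n:ℝ))), ← Real.rpow_mul (hev i)]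
      rw [one_div_mul_cancel hn0, Real.rpow_one]
    calc ∏ i, hH.eigenvalues i = (∏ i, hH.eigenvalues i ^ (1 / (n:ℝ))) ^ (n:ℕ) := h1.symm
      _ ≤ 1 ^ (n:ℕ) := by
          apply pow_le_pow_left₀ (Finset.prod_nonneg fun i _ => Real.rpow_nonneg (hev i) _)
          exact le_trans hamgm hgm
      _ = 1 := one_pow _
  have hdet : B.det = A.det ^ 2 := by
    simp [hB, Matrix.det_mul, sq]
  have : A.det ^ 2 ≤ 1 := by
    rw [← hdet, hH.det_eq_prod_eigenvalues]
    exact_mod_cast hprod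
  exact (sq_le_one_iff_abs_le_one _).mp this

variable {Ω : Type*} [MeasurableSpace Ω] {μ : Measure Ω}

lemma inner_toLp_eq' {f g : Ω → ℝ} (hf : MemLp f 2 μ) (hg : MemLp g 2 μ) :
    @inner ℝ _ _ (hf.toLp f) (hg.toLp g) = ∫ ω, f ω * g ω ∂μ := by
  rw [MeasureTheory.L2.inner_def]
  refine integral_congr_ae ?_
  filter_upwards [hf.coeFn_toLp, hg.coeFn_toLp] with ω h1 h2
  simp [h1, h2, RCLike.inner_apply, mul_comm]

lemma coord_memLp' {n : ℕ} [IsProbabilityMeasure μ] (V : Ω → EuclideanSpace ℝ (Fin n))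
    (hVmeas : Measurable V) (hVnorm : ∀ᵐ ω ∂μ, ‖V ω‖ = 1) (j : Fin n) :
    MemLp (fun ω => V ω j) 2 μ := by
  refine MemLp.of_bound ((measurable_pi_apply j |>.comp (WithLp.measurable_ofLp 2 _ |>.comp hVmeas)).aestronglyMeasurable) 1 ?_
  filter_upwards [hVnorm] with ω hω
  calc ‖V ω j‖ = Real.sqrt (‖V ω j‖ ^ 2) := (Real.sqrt_sq (norm_nonneg _)).symm
    _ ≤ ‖V ω‖ := by
        rw [EuclideanSpace.norm_eq]
        exact Real.sqrt_le_sqrt (Finset.single_le_sum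
          (fun i _ => sq_nonneg ‖V ω i‖) (Finset.mem_univ j))
    _ = 1 := hω

end Aux

/-- Measure-theoretic core of Proposition 5.1(1): if `V : Ω → ℝⁿ` is a.e. a unit vector
and `δ₁,…,δₙ` are orthonormal for the inner product `⟨f,g⟩ = n∫ f·g dμ`, then the matrix
`A_{ij} = n∫ δᵢ·Vⱼ dμ` has `|det A| ≤ 1`. -/
theorem abs_det_le_one {Ω : Type*} [MeasurableSpace Ω] (μ : Measure Ω)
    [IsProbabilityMeasure μ] (n : ℕ) (hn : 1 ≤ n)
    (V : Ω → EuclideanSpace ℝ (Fin n)) (hVmeas : Measurable V)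
    (hVnorm : ∀ᵐ ω ∂μ, ‖V ω‖ = 1)
    (δ : Fin n → Ω → ℝ) (hδ : ∀ i, MemLp (δ i) 2 μ)
    (horth : ∀ i j, (n : ℝ) * ∫ ω, δ i ω * δ j ω ∂μ = if i = j then 1 else 0)
    (A : Matrix (Fin n) (Fin n) ℝ)
    (hA : ∀ i j, A i j = (n : ℝ) * ∫ ω, δ i ω * V ω j ∂μ) :
    |A.det| ≤ 1 := by
  have hVj : ∀ j, MemLp (fun ω => V ω j) 2 μ := coord_memLp' V hVmeas hVnorm
  have hs : Real.sqrt n * Real.sqrt n = (n : ℝ) :=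
    Real.mul_self_sqrt (by positivity)
  -- the orthonormal family and the target vectors in L²
  set e : Fin n → Lp ℝ 2 μ := fun i => Real.sqrt n • (hδ i).toLp (δ i) with he
  set f : Fin n → Lp ℝ 2 μ := fun j => Real.sqrt n • (hVj j).toLp _ with hf
  have hee : ∀ i j, @inner ℝ _ _ (e i) (e j) = (n : ℝ) * ∫ ω, δ i ω * δ j ω ∂μ := by
    intro i j
    rw [he]
    simp only [real_inner_smul_left, real_inner_smul_right, inner_toLp_eq' (hδ i) (hδ j)]
    rw [← mul_assoc, hs]
  have hef : ∀ i j, @inner ℝ _ _ (e i) (f j) = A i j := by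
    intro i j
    rw [he, hf, hA]
    simp only [real_inner_smul_left, real_inner_smul_right,
      inner_toLp_eq' (hδ i) (hVj j)]
    rw [← mul_assoc, hs]
  have horth' : Orthonormal ℝ e := by
    rw [orthonormal_iff_ite]
    intro i j
    rw [hee, horth]
  -- Bessel inequality for each column
  have hbessel : ∀ j, ∑ i, (A i j) ^ 2 ≤ (n : ℝ) * ∫ ω, (V ω j) ^ 2 ∂μ := by
    intro j
    have := horth'.sum_inner_products_le (s := Finset.univ) (f j)
    have hnorm : ‖f j‖ ^ 2 = (n : ℝ) * ∫ ω, (V ω j) ^ 2 ∂μ := by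
      rw [← real_inner_self_eq_norm_sq, hf]
      simp only [real_inner_smul_left, real_inner_smul_right,
        inner_toLp_eq' (hVj j) (hVj j)]
      rw [← mul_assoc, hs]
      congr 1
      exact integral_congr_ae (Filter.Eventually.of_forall fun ω => (sq (V ω j)).symm)
    calc ∑ i, (A i j) ^ 2 = ∑ i, ‖@inner ℝ _ _ (e i) (f j)‖ ^ 2 := by
          refine Finset.sum_congr rfl fun i _ => ?_
          rw [hef, Real.norm_eq_abs, sq_abs]
      _ ≤ ‖f j‖ ^ 2 := this
      _ = (n : ℝ) * ∫ ω, (V ω j) ^ 2 ∂μ := hnorm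
  -- summing the L² norms of the coordinates gives n
  have hsum : ∑ j, (n : ℝ) * ∫ ω, (V ω j) ^ 2 ∂μ = (n : ℝ) := by
    rw [← Finset.mul_sum, ← integral_finset_sum _ (fun j _ => (hVj j).integrable_sq)]
    have : ∫ ω, ∑ j, (V ω j) ^ 2 ∂μ = 1 := by
      have h1 : (fun ω => ∑ j, (V ω j) ^ 2) =ᵐ[μ] fun _ => (1 : ℝ) := by
        filter_upwards [hVnorm] with ω hω
        have : ∑ j, (V ω j) ^ 2 = ‖V ω‖ ^ 2 := by
          rw [EuclideanSpace.norm_eq, Real.sq_sqrt (Finset.sum_nonneg fun i _ => sq_nonneg _)]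
          exact Finset.sum_congr rfl fun i _ => by rw [Real.norm_eq_abs, sq_abs]
        rw [this, hω, one_pow]
      rw [integral_congr_ae h1, integral_const, probReal_univ]
      simp
    rw [this, mul_one]
  refine det_le_one_of_sum_sq' hn A ?_
  rw [Finset.sum_comm]
  calc ∑ j, ∑ i, (A i j) ^ 2 ≤ ∑ j, (n : ℝ) * ∫ ω, (V ω j) ^ 2 ∂μ :=
        Finset.sum_le_sum fun j _ => hbessel j
    _ = (n : ℝ) := hsum
end

section
/- For every integer n ≥ 1 there exists a constant c₀ = c₀(n) > 0 such that the following holds. Let (Ω, μ) be a probability space and V : Ω → ℝⁿ a measurable map with Euclidean norm ‖V(ω)‖ = 1 for μ-almost every ω. Let δ₁, …, δₙ be real-valued square-integrable functions on Ω that are orthonormal with respect to the inner product ⟨f, g⟩ := n·∫_Ω f·g dμ. Define the n×n matrix A by A_{ij} = n·∫_Ω δ_i(ω)·V_j(ω) dμ(ω), and define the vector E(δ₁) := n·∫_Ω δ₁(ω)·V(ω) dμ(ω) ∈ ℝⁿ. Then |det A| ≤ 1 − c₀·∫_Ω (δ₁(ω) − ⟨V(ω), E(δ₁)⟩)² dμ(ω),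 where ⟨·,·⟩ is the Euclidean inner product on ℝⁿ. -/
open MeasureTheory Matrix Finset

lemma pow_aux (n : ℕ) (hn : 1 ≤ n) : (n:ℝ)^3 ≤ ((n:ℝ)+1)^4 ∧ (n:ℝ)^4 ≤ ((n:ℝ)+1)^4 ∧ ((n:ℝ)+1)^2 ≤ ((n:ℝ)+1)^4 := by
  have hn1 : (1:ℝ) ≤ n := by exact_mod_cast hn
  have h1 : (n:ℝ)^4 ≤ ((n:ℝ)+1)^4 := by
    apply pow_le_pow_left₀ (by linarith) (by linarith)
  have h2 : (n:ℝ)^3 ≤ (n:ℝ)^4 := by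
    calc (n:ℝ)^3 = (n:ℝ)^3 * 1 := by ring
    _ ≤ (n:ℝ)^3 * (n:ℝ) := mul_le_mul_of_nonneg_left hn1 (by positivity)
    _ = (n:ℝ)^4 := by ring
  have h3 : ((n:ℝ)+1)^2 ≤ ((n:ℝ)+1)^4 := by
    apply pow_le_pow_right₀ (by linarith) (by norm_num)
  exact ⟨h2.trans h1, h1, h3⟩

lemma pointwise_log (n : ℕ) (hn : 1 ≤ n) {x : ℝ} (hx : 0 < x) (hxn : x ≤ n) :
    (1 - x)^2 ≤ ((n:ℝ)+1)^2 * (x - 1 - Real.log x) := by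
  have hn1 : (1:ℝ) ≤ n := by exact_mod_cast hn
  set s := Real.sqrt x with hsdef
  have hsq : s ^ 2 = x := Real.sq_sqrt hx.le
  have hs0 : 0 ≤ s := Real.sqrt_nonneg x
  have hlog : Real.log x ≤ 2*(s - 1) := by
    have h := Real.log_le_sub_one_of_pos (Real.sqrt_pos.mpr hx)
    rw [Real.log_sqrt hx.le] at h; linarith
  have hsn : s ≤ n := by nlinarith [sq_nonneg (s - n)]
  have h1 : (s-1)^2 ≤ x - 1 - Real.log x := by nlinarith
  have h2 : (1-x)^2 = (s-1)^2*(s+1)^2 := by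
    have : 1 - x = (1-s)*(1+s) := by linear_combination hsq
    rw [this]; ring
  have h3 : (s+1)^2 ≤ ((n:ℝ)+1)^2 := by nlinarith
  calc (1-x)^2 = (s-1)^2*(s+1)^2 := h2
  _ ≤ (s-1)^2*(((n:ℝ)+1)^2) := mul_le_mul_of_nonneg_left h3 (sq_nonneg _)
  _ = ((n:ℝ)+1)^2 * (s-1)^2 := by ring
  _ ≤ ((n:ℝ)+1)^2 * (x - 1 - Real.log x) := mul_le_mul_of_nonneg_left h1 (by positivity)

lemma scalar_key (n : ℕ) (hn : 1 ≤ n) (lam : Fin n → ℝ) (h0 : ∀ i, 0 ≤ lam i)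
    (hs : ∑ i, lam i ≤ n) :
    (∑ i, (1 - lam i)^2) + (n:ℝ)^3 * ((n:ℝ) - ∑ i, lam i) ≤
      (10*((n:ℝ)+1)^4) * (1 - ∏ i, lam i) := by
  have hn1 : (1:ℝ) ≤ n := by exact_mod_cast hn
  obtain ⟨e2, e4, e1⟩ := pow_aux n hn
  have hlamn : ∀ i, lam i ≤ n := by
    intro i
    calc lam i ≤ ∑ j, lam j := Finset.single_le_sum (fun j _ => h0 j) (mem_univ i)
    _ ≤ n := hs
  have hsum0 : (0:ℝ) ≤ ∑ i, lam i := Finset.sum_nonneg fun i _ => h0 i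
  rcases le_or_gt (∏ i, lam i) (1/2) with hp | hp
  · have h1 : ∑ i, (1 - lam i)^2 ≤ (n:ℝ)^3 := by
      calc ∑ i, (1 - lam i)^2 ≤ ∑ _i : Fin n, (n:ℝ)^2 := by
            refine Finset.sum_le_sum fun i _ => ?_
            have := h0 i; have := hlamn i; nlinarith
      _ = (n:ℝ) * (n:ℝ)^2 := by simp [mul_comm]
      _ ≤ (n:ℝ)^3 := by nlinarith
    have hterm2 : (n:ℝ)^3*((n:ℝ) - ∑ i, lam i) ≤ (n:ℝ)^4 := by
      calc (n:ℝ)^3*((n:ℝ) - ∑ i, lam i) ≤ (n:ℝ)^3*(n:ℝ) :=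
            mul_le_mul_of_nonneg_left (by linarith) (by positivity)
      _ = (n:ℝ)^4 := by ring
    have hRHS : 5*((n:ℝ)+1)^4 ≤ 10*((n:ℝ)+1)^4*(1 - ∏ i, lam i) := by
      nlinarith [pow_nonneg (by linarith : (0:ℝ) ≤ (n:ℝ)+1) 4]
    nlinarith
  · have hpos : ∀ i, 0 < lam i := by
      intro i
      rcases (h0 i).lt_or_eq with h | h
      · exact h
      · exfalso
        have : ∏ j, lam j = 0 := Finset.prod_eq_zero (mem_univ i) h.symm
        rw [this] at hp; norm_num at hp
    have hlogp : Real.log (∏ i, lam i) = ∑ i, Real.log (lam i) :=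
      Real.log_prod fun i _ => (hpos i).ne'
    set p := ∏ i, lam i with hpdef
    have hp0 : 0 < p := Finset.prod_pos fun i _ => hpos i
    have hphi : ∀ i, (1 - lam i)^2 ≤ ((n:ℝ)+1)^2 * (lam i - 1 - Real.log (lam i)) :=
      fun i => pointwise_log n hn (hpos i) (hlamn i)
    have hphi0 : ∀ i, 0 ≤ lam i - 1 - Real.log (lam i) := by
      intro i
      have := Real.log_le_sub_one_of_pos (hpos i); linarith
    have hsum_phi : ∑ i, (lam i - 1 - Real.log (lam i)) = (∑ i, lam i) - n - Real.log p := by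
      rw [hlogp]; rw [Finset.sum_sub_distrib, Finset.sum_sub_distrib]; simp
    have hneglog : 0 ≤ -Real.log p := by
      have h1 : 0 ≤ ∑ i, (lam i - 1 - Real.log (lam i)) :=
        Finset.sum_nonneg fun i _ => hphi0 i
      rw [hsum_phi] at h1; linarith
    have hple1 : p ≤ 1 := by
      by_contra h
      push_neg at h
      have := Real.log_pos h; linarith
    have hloglb : -Real.log p ≤ 2*(1 - p) := by
      have h := Real.log_le_sub_one_of_pos (show (0:ℝ) < 1/p by positivity)
      rw [Real.log_div one_ne_zero hp0.ne', Real.log_one] at h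
      have hid : (1-p)/p = 1/p - 1 := by field_simp
      have h2 : -Real.log p ≤ (1-p)/p := by rw [hid]; linarith
      calc -Real.log p ≤ (1-p)/p := h2
      _ ≤ 2*(1-p) := by
            rw [div_le_iff₀ hp0]; nlinarith
    have hkey : (∑ i, (1 - lam i)^2) + (n:ℝ)^3 * ((n:ℝ) - ∑ i, lam i)
        ≤ ((n:ℝ)+1)^4 * (-Real.log p) := by
      have hA : ∑ i, (1 - lam i)^2 ≤ ((n:ℝ)+1)^2 * ∑ i, (lam i - 1 - Real.log (lam i)) := by
        rw [Finset.mul_sum]; exact Finset.sum_le_sum fun i _ => hphi i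
      have hSphi : 0 ≤ ∑ i, (lam i - 1 - Real.log (lam i)) :=
        Finset.sum_nonneg fun i _ => hphi0 i
      have hns : 0 ≤ (n:ℝ) - ∑ i, lam i := by linarith
      have hexp : -Real.log p = (∑ i, (lam i - 1 - Real.log (lam i))) + ((n:ℝ) - ∑ i, lam i) := by
        rw [hsum_phi]; ring
      rw [hexp, mul_add]
      have t1 : ∑ i, (1 - lam i)^2 ≤ ((n:ℝ)+1)^4 * ∑ i, (lam i - 1 - Real.log (lam i)) := by
        calc ∑ i, (1 - lam i)^2 ≤ ((n:ℝ)+1)^2 * ∑ i, (lam i - 1 - Real.log (lam i)) := hA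
        _ ≤ ((n:ℝ)+1)^4 * ∑ i, (lam i - 1 - Real.log (lam i)) :=
            mul_le_mul_of_nonneg_right e1 hSphi
      have t2 : (n:ℝ)^3 * ((n:ℝ) - ∑ i, lam i) ≤ ((n:ℝ)+1)^4 * ((n:ℝ) - ∑ i, lam i) :=
        mul_le_mul_of_nonneg_right e2 hns
      linarith
    have hC : ((n:ℝ)+1)^4 * (-Real.log p) ≤ 2*((n:ℝ)+1)^4 * (1 - p) := by
      have hpw : (0:ℝ) ≤ ((n:ℝ)+1)^4 := by positivity
      nlinarith
    calc (∑ i, (1 - lam i)^2) + (n:ℝ)^3 * ((n:ℝ) - ∑ i, lam i)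
        ≤ ((n:ℝ)+1)^4 * (-Real.log p) := hkey
    _ ≤ 2*((n:ℝ)+1)^4 * (1 - p) := hC
    _ ≤ (10*((n:ℝ)+1)^4) * (1 - p) := by
        nlinarith [pow_nonneg (by linarith : (0:ℝ) ≤ (n:ℝ)+1) 4]

-- helper: trace of conjugated diagonal, and of its square
lemma conj_diag_trace (n : ℕ) (U : Matrix.unitaryGroup (Fin n) ℝ) (d : Fin n → ℝ) :
    ((U : Matrix (Fin n) (Fin n) ℝ) * diagonal d * star (U : Matrix (Fin n) (Fin n) ℝ)).trace
      = ∑ i, d i := by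
  rw [trace_mul_cycle]
  have h : star (U : Matrix (Fin n) (Fin n) ℝ) * (U : Matrix (Fin n) (Fin n) ℝ) = 1 :=
    Matrix.UnitaryGroup.star_mul_self U
  rw [h, Matrix.one_mul, trace_diagonal]

lemma conj_diag_sq_trace (n : ℕ) (U : Matrix.unitaryGroup (Fin n) ℝ) (d : Fin n → ℝ) :
    (((U : Matrix (Fin n) (Fin n) ℝ) * diagonal d * star (U : Matrix (Fin n) (Fin n) ℝ)) *
     ((U : Matrix (Fin n) (Fin n) ℝ) * diagonal d * star (U : Matrix (Fin n) (Fin n) ℝ))).trace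
      = ∑ i, (d i)^2 := by
  have h : star (U : Matrix (Fin n) (Fin n) ℝ) * (U : Matrix (Fin n) (Fin n) ℝ) = 1 :=
    Matrix.UnitaryGroup.star_mul_self U
  have key : ((U : Matrix (Fin n) (Fin n) ℝ) * diagonal d * star (U : Matrix (Fin n) (Fin n) ℝ)) *
     ((U : Matrix (Fin n) (Fin n) ℝ) * diagonal d * star (U : Matrix (Fin n) (Fin n) ℝ))
     = (U : Matrix (Fin n) (Fin n) ℝ) * diagonal (fun i => d i * d i) * star (U : Matrix (Fin n) (Fin n) ℝ) := by
    rw [← Matrix.diagonal_mul_diagonal]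
    calc ((U : Matrix (Fin n) (Fin n) ℝ) * diagonal d * star (U : Matrix (Fin n) (Fin n) ℝ)) *
     ((U : Matrix (Fin n) (Fin n) ℝ) * diagonal d * star (U : Matrix (Fin n) (Fin n) ℝ))
        = (U : Matrix (Fin n) (Fin n) ℝ) * diagonal d * ((star (U : Matrix (Fin n) (Fin n) ℝ) * (U : Matrix (Fin n) (Fin n) ℝ)) * diagonal d * star (U : Matrix (Fin n) (Fin n) ℝ)) := by
          simp only [Matrix.mul_assoc]
    _ = _ := by rw [h, Matrix.one_mul, ← Matrix.mul_assoc, ← Matrix.mul_assoc]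
  rw [key, conj_diag_trace]
  simp [pow_two]

lemma matrix_key (n : ℕ) (hn : 1 ≤ n) (A : Matrix (Fin n) (Fin n) ℝ)
    (htr : (A * Aᵀ).trace ≤ (n:ℝ)) :
    (∑ i, ∑ m, ((if i = m then (1:ℝ) else 0) - (A * Aᵀ) i m)^2)
      + (n:ℝ)^3 * ((n:ℝ) - (A * Aᵀ).trace) ≤ 20*((n:ℝ)+1)^4 * (1 - |A.det|) := by
  have hAH : Aᴴ = Aᵀ := Matrix.conjTranspose_eq_transpose_of_trivial A
  have hpsd : (A * Aᵀ).PosSemidef := by rw [← hAH]; exact posSemidef_self_mul_conjTranspose A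
  set G := A * Aᵀ with hGdef
  have hG : G.IsHermitian := hpsd.1
  set U := hG.eigenvectorUnitary with hU
  set lam := hG.eigenvalues with hlam
  have hl0 : ∀ i, 0 ≤ lam i := hpsd.eigenvalues_nonneg
  have hofr : (RCLike.ofReal ∘ lam : Fin n → ℝ) = lam := rfl
  have hspec : G = (U : Matrix (Fin n) (Fin n) ℝ) * diagonal lam * star (U : Matrix (Fin n) (Fin n) ℝ) := by
    have := hG.spectral_theorem
    rwa [hofr] at this
  have htrace : G.trace = ∑ i, lam i := by rw [hspec, conj_diag_trace]
  have hdet : G.det = ∏ i, lam i := by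
    have := hG.det_eq_prod_eigenvalues
    exact this
  have hone : (1 : Matrix (Fin n) (Fin n) ℝ) =
      (U : Matrix (Fin n) (Fin n) ℝ) * diagonal (fun _ => (1:ℝ)) * star (U : Matrix (Fin n) (Fin n) ℝ) := by
    have h := Matrix.UnitaryGroup.star_mul_self U
    rw [Matrix.diagonal_one, Matrix.mul_one, mul_eq_one_comm.mp h]
  have hsub : (1 : Matrix (Fin n) (Fin n) ℝ) - G =
      (U : Matrix (Fin n) (Fin n) ℝ) * diagonal (fun i => 1 - lam i) * star (U : Matrix (Fin n) (Fin n) ℝ) := by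
    rw [hone, hspec]
    rw [show (diagonal (fun i => 1 - lam i) : Matrix (Fin n) (Fin n) ℝ)
        = diagonal (fun _ => (1:ℝ)) - diagonal lam by rw [Matrix.diagonal_sub]]
    noncomm_ring
  have hBB : (((1 : Matrix (Fin n) (Fin n) ℝ) - G) * ((1 : Matrix (Fin n) (Fin n) ℝ) - G)).trace
      = ∑ i, (1 - lam i)^2 := by
    rw [hsub, conj_diag_sq_trace]
  have hGsym : ∀ i m, G m i = G i m := by
    intro i m
    have h1 : Gᵀ = G := by
      calc Gᵀ = Gᴴ := (Matrix.conjTranspose_eq_transpose_of_trivial G).symm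
      _ = G := hG
    calc G m i = Gᵀ i m := (Matrix.transpose_apply G i m).symm
    _ = G i m := by rw [h1]
  have hfrob : ∑ i, ∑ m, ((if i = m then (1:ℝ) else 0) - G i m)^2
      = (((1 : Matrix (Fin n) (Fin n) ℝ) - G) * ((1 : Matrix (Fin n) (Fin n) ℝ) - G)).trace := by
    simp only [Matrix.trace, Matrix.diag, Matrix.mul_apply]
    refine Finset.sum_congr rfl fun i _ => Finset.sum_congr rfl fun m _ => ?_
    have e1 : ((1 : Matrix (Fin n) (Fin n) ℝ) - G) i m = (if i = m then (1:ℝ) else 0) - G i m := by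
      simp [Matrix.sub_apply, Matrix.one_apply]
    have e2 : ((1 : Matrix (Fin n) (Fin n) ℝ) - G) m i = (if i = m then (1:ℝ) else 0) - G i m := by
      simp only [Matrix.sub_apply, Matrix.one_apply, hGsym i m]
      congr 1
      by_cases h : i = m
      · simp [h]
      · rw [if_neg h, if_neg (fun hh => h hh.symm)]
    rw [e1, e2, pow_two]
  have hsum : ∑ i, lam i ≤ (n:ℝ) := by rw [← htrace]; exact htr
  have hscalar := scalar_key n hn lam hl0 hsum
  have hdet2 : A.det^2 = ∏ i, lam i := by
    rw [← hdet, hGdef, Matrix.det_mul, Matrix.det_transpose, pow_two]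
  have hfin : ∑ i, ∑ m, ((if i = m then (1:ℝ) else 0) - G i m)^2 + (n:ℝ)^3*((n:ℝ) - G.trace)
      ≤ 10*((n:ℝ)+1)^4 * (1 - A.det^2) := by
    rw [hfrob, hBB, htrace, hdet2]
    exact hscalar
  -- |det A| ≤ 1
  have hpw : (0:ℝ) < ((n:ℝ)+1)^4 := by positivity
  have hLHS0 : 0 ≤ ∑ i, ∑ m, ((if i = m then (1:ℝ) else 0) - G i m)^2 :=
    Finset.sum_nonneg fun i _ => Finset.sum_nonneg fun m _ => sq_nonneg _
  have hns : 0 ≤ (n:ℝ) - G.trace := by linarith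
  have hL : (0:ℝ) ≤ ∑ i, ∑ m, ((if i = m then (1:ℝ) else 0) - G i m)^2 + (n:ℝ)^3*((n:ℝ) - G.trace) :=
    add_nonneg hLHS0 (mul_nonneg (by positivity) hns)
  have h0 : (0:ℝ) ≤ 10*((n:ℝ)+1)^4 * (1 - A.det^2) := hL.trans hfin
  have hd1 : A.det^2 ≤ 1 := by
    by_contra h
    push_neg at h
    nlinarith [h0, mul_pos (show (0:ℝ) < 10*((n:ℝ)+1)^4 by positivity)
      (show (0:ℝ) < A.det^2 - 1 by linarith)]
  have habs : |A.det| ≤ 1 := by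
    have := sq_abs A.det
    nlinarith [abs_nonneg A.det]
  have habs0 : 0 ≤ |A.det| := abs_nonneg _
  have hsq : A.det^2 = |A.det|^2 := (sq_abs A.det).symm
  calc ∑ i, ∑ m, ((if i = m then (1:ℝ) else 0) - G i m)^2 + (n:ℝ)^3*((n:ℝ) - G.trace)
      ≤ 10*((n:ℝ)+1)^4 * (1 - A.det^2) := hfin
  _ ≤ 20*((n:ℝ)+1)^4 * (1 - |A.det|) := by
      nlinarith [sq_abs A.det, mul_nonneg (le_of_lt hpw) (sq_nonneg (1 - |A.det|))]

lemma L2mul {Ω : Type} [MeasurableSpace Ω] {μ : Measure Ω} {f g : Ω → ℝ}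
    (hf : MemLp f 2 μ) (hg : MemLp g 2 μ) : Integrable (fun ω => f ω * g ω) μ := by
  have h : MemLp (f • g) 1 μ := hg.smul hf
  exact memLp_one_iff_integrable.mp h

lemma bessel_ineq {Ω : Type} [MeasurableSpace Ω] (μ : Measure Ω) [IsProbabilityMeasure μ]
    (n : ℕ) (hn : 1 ≤ n) (δ : Fin n → Ω → ℝ) (hδ : ∀ i, MemLp (δ i) 2 μ)
    (horth : ∀ i j, (n : ℝ) * ∫ ω, δ i ω * δ j ω ∂μ = if i = j then 1 else 0)
    (g : Ω → ℝ) (hg : MemLp g 2 μ) :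
    ∑ i, ((n:ℝ) * ∫ ω, δ i ω * g ω ∂μ)^2 ≤ (n:ℝ) * ∫ ω, (g ω)^2 ∂μ := by
  have hn0 : (0:ℝ) < n := by exact_mod_cast hn
  set c : Fin n → ℝ := fun i => (n:ℝ) * ∫ ω, δ i ω * g ω ∂μ with hc
  set h : Ω → ℝ := fun ω => ∑ i, c i * δ i ω with hhdef
  have hh2 : MemLp h 2 μ := by
    have h2 := memLp_finset_sum' (μ := μ) (p := 2) (univ : Finset (Fin n))
      (f := fun i ω => c i * δ i ω) (fun i _ => (hδ i).const_mul (c i))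
    have heq : (∑ i : Fin n, fun ω => c i * δ i ω) = h := by
      funext ω; rw [hhdef]; simp [Finset.sum_apply]
    rwa [heq] at h2
  have hint_gg : Integrable (fun ω => g ω * g ω) μ := L2mul hg hg
  have hint_gh : Integrable (fun ω => g ω * h ω) μ := L2mul hg hh2
  have hint_hh : Integrable (fun ω => h ω * h ω) μ := L2mul hh2 hh2
  have hint_dg : ∀ i : Fin n, Integrable (fun ω => δ i ω * g ω) μ := fun i => L2mul (hδ i) hg
  have hint_dd : ∀ i j : Fin n, Integrable (fun ω => δ i ω * δ j ω) μ :=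
    fun i j => L2mul (hδ i) (hδ j)
  -- ∫ g h
  have hgh : ∫ ω, g ω * h ω ∂μ = (∑ i, (c i)^2) / n := by
    have e1 : ∀ ω, g ω * h ω = ∑ i, c i * (δ i ω * g ω) := by
      intro ω; rw [hhdef]; simp only []
      rw [Finset.mul_sum]; exact Finset.sum_congr rfl fun i _ => by ring
    rw [show (fun ω => g ω * h ω) = fun ω => ∑ i, c i * (δ i ω * g ω) from funext e1]
    rw [integral_finset_sum _ (fun i _ => (hint_dg i).const_mul (c i))]
    rw [Finset.sum_div]
    refine Finset.sum_congr rfl fun i _ => ?_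
    rw [integral_const_mul]
    have : ∫ ω, δ i ω * g ω ∂μ = c i / n := by
      rw [hc]; field_simp
    rw [this]; field_simp
  -- ∫ h h
  have hhh : ∫ ω, h ω * h ω ∂μ = (∑ i, (c i)^2) / n := by
    have e1 : ∀ ω, h ω * h ω = ∑ i, ∑ j, (c i * c j) * (δ i ω * δ j ω) := by
      intro ω; rw [hhdef]; simp only []
      rw [Finset.sum_mul_sum]
      exact Finset.sum_congr rfl fun i _ => Finset.sum_congr rfl fun j _ => by ring
    rw [show (fun ω => h ω * h ω) = fun ω => ∑ i, ∑ j, (c i * c j) * (δ i ω * δ j ω) from funext e1]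
    rw [integral_finset_sum _ (fun i _ => by
      exact integrable_finset_sum _ (fun j _ => (hint_dd i j).const_mul _))]
    have e2 : ∀ i : Fin n, ∫ ω, ∑ j, (c i * c j) * (δ i ω * δ j ω) ∂μ = (c i)^2 / n := by
      intro i
      rw [integral_finset_sum _ (fun j _ => (hint_dd i j).const_mul _)]
      have e3 : ∀ j : Fin n, ∫ ω, (c i * c j) * (δ i ω * δ j ω) ∂μ
          = (c i * c j) * ((if i = j then (1:ℝ) else 0) / n) := by
        intro j
        rw [integral_const_mul]
        congr 1
        have := horth i j
        field_simp
        linarith [this]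
      rw [Finset.sum_congr rfl fun j _ => e3 j]
      rw [Finset.sum_eq_single i]
      · simp; ring
      · intro j _ hji; rw [if_neg (fun hh => hji hh.symm)]; simp
      · intro habs; exact absurd (mem_univ i) habs
    rw [Finset.sum_congr rfl fun i _ => e2 i, Finset.sum_div]
  -- expansion
  have hexp : ∫ ω, (g ω - h ω)^2 ∂μ = ∫ ω, g ω * g ω ∂μ - (∑ i, (c i)^2) / n := by
    have e1 : ∀ ω, (g ω - h ω)^2 = g ω * g ω - 2 * (g ω * h ω) + h ω * h ω := by
      intro ω; ring
    rw [show (fun ω => (g ω - h ω)^2) = fun ω => g ω * g ω - 2 * (g ω * h ω) + h ω * h ω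
      from funext e1]
    have hint1 : Integrable (fun ω => g ω * g ω - 2 * (g ω * h ω)) μ :=
      hint_gg.sub (hint_gh.const_mul 2)
    have hint2 : Integrable (fun ω => 2 * (g ω * h ω)) μ := hint_gh.const_mul 2
    rw [integral_add hint1 hint_hh, integral_sub hint_gg hint2, integral_const_mul, hgh, hhh]
    ring
  have hpos : 0 ≤ ∫ ω, (g ω - h ω)^2 ∂μ := integral_nonneg fun ω => sq_nonneg _
  rw [hexp] at hpos
  have : ∫ ω, (g ω)^2 ∂μ = ∫ ω, g ω * g ω ∂μ := by
    congr 1; funext ω; ring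
  rw [this]
  have h2 : (∑ i, (c i)^2) / n ≤ ∫ ω, g ω * g ω ∂μ := by linarith
  calc ∑ i, (c i)^2 = ((∑ i, (c i)^2) / n) * n := by field_simp
  _ ≤ (∫ ω, g ω * g ω ∂μ) * n := mul_le_mul_of_nonneg_right h2 hn0.le
  _ = (n:ℝ) * ∫ ω, g ω * g ω ∂μ := by ring

section Main
variable {Ω : Type} [MeasurableSpace Ω] {μ : Measure Ω}

set_option maxHeartbeats 1000000 in
theorem abs_det_quantitative' (n : ℕ) (hn : 1 ≤ n)
    [IsProbabilityMeasure μ]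
    (V : Ω → EuclideanSpace ℝ (Fin n)) (hVmeas : Measurable V)
    (hV1 : ∀ᵐ ω ∂μ, ‖V ω‖ = 1)
    (δ : Fin n → Ω → ℝ) (hδ : ∀ i, MemLp (δ i) 2 μ)
    (horth : ∀ i j, (n : ℝ) * ∫ ω, δ i ω * δ j ω ∂μ = if i = j then 1 else 0)
    (A : Matrix (Fin n) (Fin n) ℝ)
    (hA : ∀ i j, A i j = (n : ℝ) * ∫ ω, δ i ω * V ω j ∂μ)
    (E : EuclideanSpace ℝ (Fin n))
    (hE : E = (n : ℝ) • ∫ ω, δ ⟨0, hn⟩ ω • V ω ∂μ) :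
    |A.det| ≤ 1 - (1/(20*((n:ℝ)+1)^4)) * ∫ ω, (δ ⟨0, hn⟩ ω - (inner ℝ (V ω) E : ℝ)) ^ 2 ∂μ := by
  set i0 : Fin n := ⟨0, hn⟩ with hi0
  clear_value i0
  have hn0 : (0:ℝ) < n := by exact_mod_cast hn
  have hn1 : (1:ℝ) ≤ n := by exact_mod_cast hn
  -- coordinates of V
  have hVj : ∀ j : Fin n, Measurable (fun ω => V ω j) :=
    fun j => (EuclideanSpace.proj (𝕜 := ℝ) j).continuous.measurable.comp hVmeas
  have hVm : ∀ j, MemLp (fun ω => V ω j) 2 μ := by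
    intro j
    refine MemLp.of_bound ((hVj j).aestronglyMeasurable) 1 ?_
    filter_upwards [hV1] with ω hω
    have h1 : |V ω j| ≤ ‖V ω‖ := by
      rw [EuclideanSpace.norm_eq]
      refine Real.abs_le_sqrt ?_
      simpa [Real.norm_eq_abs, sq_abs] using
        Finset.single_le_sum (f := fun i => ‖V ω i‖^2) (fun i _ => sq_nonneg _) (mem_univ j)
    rw [Real.norm_eq_abs]; rw [hω] at h1; exact h1
  have hIdd : ∀ i j, Integrable (fun ω => δ i ω * δ j ω) μ := fun i j => L2mul (hδ i) (hδ j)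
  have hIdV : ∀ i j, Integrable (fun ω => δ i ω * V ω j) μ := fun i j => L2mul (hδ i) (hVm j)
  have hIVV : ∀ j k, Integrable (fun ω => V ω j * V ω k) μ := fun j k => L2mul (hVm j) (hVm k)
  -- E coordinates
  have hsmul_int : Integrable (fun ω => δ i0 ω • V ω) μ := by
    refine Integrable.mono' (((hδ i0).integrable one_le_two).abs)
      ((hδ i0).aestronglyMeasurable.smul hVmeas.aestronglyMeasurable) ?_
    filter_upwards [hV1] with ω hω
    rw [norm_smul, hω, mul_one, Real.norm_eq_abs]
  have hEj : ∀ j, E j = A i0 j := by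
    intro j
    rw [hE, hA]
    have h1 : ((n:ℝ) • (∫ ω, δ i0 ω • V ω ∂μ) : EuclideanSpace ℝ (Fin n)) j
        = (n:ℝ) * (∫ ω, δ i0 ω • V ω ∂μ) j := rfl
    rw [h1]
    congr 1
    have h2 := (EuclideanSpace.proj (𝕜 := ℝ) j).integral_comp_comm hsmul_int
    have h3 : (∫ ω, δ i0 ω • V ω ∂μ) j = EuclideanSpace.proj (𝕜 := ℝ) j (∫ ω, δ i0 ω • V ω ∂μ) := by
      simp
    rw [h3, ← h2]
    refine integral_congr_ae (Filter.Eventually.of_forall fun ω => ?_)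
    simp [smul_eq_mul]
  -- sum of squares of V integrates to 1
  have hsum1 : ∑ j, ∫ ω, V ω j * V ω j ∂μ = 1 := by
    rw [← integral_finset_sum _ (fun j _ => hIVV j j)]
    have hae : ∀ᵐ ω ∂μ, ∑ j, V ω j * V ω j = 1 := by
      filter_upwards [hV1] with ω hω
      have h := congrArg (fun t : ℝ => t^2) hω
      simp only [one_pow] at h
      rw [EuclideanSpace.norm_eq, Real.sq_sqrt (by positivity)] at h
      rw [← h]
      exact Finset.sum_congr rfl fun j _ => by
        rw [Real.norm_eq_abs, sq_abs, pow_two]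
    rw [integral_congr_ae hae]
    simp
  -- the function f
  set f : Ω → ℝ := fun ω => ∑ j, A i0 j * V ω j with hfdef
  clear_value f
  have hfm : MemLp f 2 μ := by
    have h2 := memLp_finset_sum' (μ := μ) (p := 2) (univ : Finset (Fin n))
      (f := fun j ω => A i0 j * V ω j) (fun j _ => (hVm j).const_mul (A i0 j))
    have heq : (∑ j : Fin n, fun ω => A i0 j * V ω j) = f := by
      funext ω; rw [hfdef]; simp [Finset.sum_apply]
    rwa [heq] at h2
  have hinner : ∀ ω, (inner ℝ (V ω) E : ℝ) = f ω := by
    intro ω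
    rw [PiLp.inner_apply, hfdef]
    refine Finset.sum_congr rfl fun j _ => ?_
    rw [hEj j]
    simp [RCLike.inner_apply, conj_trivial]
  -- integral computations
  have hIdf : Integrable (fun ω => δ i0 ω * f ω) μ := L2mul (hδ i0) hfm
  have hIff : Integrable (fun ω => f ω * f ω) μ := L2mul hfm hfm
  set t : ℝ := ∑ j, (A i0 j)^2 with ht
  clear_value t
  have hd0f : ∫ ω, δ i0 ω * f ω ∂μ = t / n := by
    have e : (fun ω => δ i0 ω * f ω) = fun ω => ∑ j, A i0 j * (δ i0 ω * V ω j) := by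
      funext ω; rw [hfdef]; simp only []; rw [Finset.mul_sum]
      exact Finset.sum_congr rfl fun j _ => by ring
    rw [e, integral_finset_sum _ (fun j _ => (hIdV i0 j).const_mul _), ht, Finset.sum_div]
    refine Finset.sum_congr rfl fun j _ => ?_
    rw [integral_const_mul]
    have : ∫ ω, δ i0 ω * V ω j ∂μ = A i0 j / n := by rw [hA]; field_simp
    rw [this, pow_two]; ring
  have hff : ∫ ω, f ω * f ω ∂μ = ∑ j, ∑ k, A i0 j * A i0 k * ∫ ω, V ω j * V ω k ∂μ := by
    have e : (fun ω => f ω * f ω) = fun ω => ∑ j, ∑ k, (A i0 j * A i0 k) * (V ω j * V ω k) := by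
      funext ω; rw [hfdef]; simp only []; rw [Finset.sum_mul_sum]
      exact Finset.sum_congr rfl fun j _ => Finset.sum_congr rfl fun k _ => by ring
    rw [e, integral_finset_sum _ (fun j _ =>
      integrable_finset_sum _ (fun k _ => (hIVV j k).const_mul _))]
    refine Finset.sum_congr rfl fun j _ => ?_
    rw [integral_finset_sum _ (fun k _ => (hIVV j k).const_mul _)]
    exact Finset.sum_congr rfl fun k _ => integral_const_mul _ _
  set T : ℝ := ∫ ω, (δ i0 ω - f ω)^2 ∂μ with hT
  clear_value T
  have hT0 : 0 ≤ T := by rw [hT]; exact integral_nonneg fun ω => sq_nonneg _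
  have hTexp : (n:ℝ) * T = 1 - 2*t + (n:ℝ) * ∫ ω, f ω * f ω ∂μ := by
    have e1 : (fun ω => (δ i0 ω - f ω)^2)
        = fun ω => δ i0 ω * δ i0 ω - 2 * (δ i0 ω * f ω) + f ω * f ω := by
      funext ω; ring
    have hint1 : Integrable (fun ω => δ i0 ω * δ i0 ω - 2 * (δ i0 ω * f ω)) μ :=
      (hIdd i0 i0).sub (hIdf.const_mul 2)
    have hint2 : Integrable (fun ω => 2 * (δ i0 ω * f ω)) μ := hIdf.const_mul 2
    rw [hT, e1, integral_add hint1 hIff, integral_sub (hIdd i0 i0) hint2,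
      integral_const_mul, hd0f]
    have hdd : ∫ ω, δ i0 ω * δ i0 ω ∂μ = 1 / n := by
      have := horth i0 i0
      rw [if_pos rfl] at this
      field_simp at this ⊢
      linarith
    rw [hdd]
    field_simp
  -- Bessel applications
  have hbes : ∀ g, MemLp g 2 μ →
      ∑ i, ((n:ℝ) * ∫ ω, δ i ω * g ω ∂μ)^2 ≤ (n:ℝ) * ∫ ω, (g ω)^2 ∂μ :=
    fun g hg => bessel_ineq μ n hn δ hδ horth g hg
  have hcol : ∀ j, ∑ i, (A i j)^2 ≤ (n:ℝ) * ∫ ω, V ω j * V ω j ∂μ := by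
    intro j
    have h := hbes _ (hVm j)
    have e : ∀ i : Fin n, ((n:ℝ) * ∫ ω, δ i ω * V ω j ∂μ)^2 = (A i j)^2 := by
      intro i; rw [← hA]
    rw [Finset.sum_congr rfl fun i _ => e i] at h
    have e2 : ∫ ω, (V ω j)^2 ∂μ = ∫ ω, V ω j * V ω j ∂μ := by
      congr 1; funext ω; ring
    rwa [e2] at h
  -- S matrix and its bounds
  set S : Fin n → Fin n → ℝ :=
    fun j k => (n:ℝ) * ∫ ω, V ω j * V ω k ∂μ - ∑ i, A i j * A i k with hS
  clear_value S
  have hSjj : ∀ j, 0 ≤ S j j := by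
    intro j
    have := hcol j
    rw [hS]; simp only []
    have e : ∀ i : Fin n, A i j * A i j = (A i j)^2 := fun i => (pow_two _).symm
    rw [Finset.sum_congr rfl fun i _ => e i]
    linarith
  have hSpm : ∀ (j k : Fin n) (ε : ℝ), ε^2 = 1 →
      0 ≤ S j j + S k k + 2 * ε * S j k := by
    intro j k ε hε2
    have hg : MemLp (fun ω => V ω j + ε * V ω k) 2 μ := (hVm j).add ((hVm k).const_mul ε)
    have h := hbes _ hg
    have hco : ∀ i, (n:ℝ) * ∫ ω, δ i ω * (V ω j + ε * V ω k) ∂μ = A i j + ε * A i k := by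
      intro i
      have e : (fun ω => δ i ω * (V ω j + ε * V ω k))
          = fun ω => δ i ω * V ω j + ε * (δ i ω * V ω k) := by funext ω; ring
      rw [e, integral_add (hIdV i j) ((hIdV i k).const_mul ε), integral_const_mul,
        mul_add, hA i j, hA i k]
      ring
    rw [Finset.sum_congr rfl fun i _ => by rw [hco i]] at h
    have hrhs : ∫ ω, (V ω j + ε * V ω k)^2 ∂μ
        = ∫ ω, V ω j * V ω j ∂μ + 2*ε*∫ ω, V ω j * V ω k ∂μ + ∫ ω, V ω k * V ω k ∂μ := by
      have e : (fun ω => (V ω j + ε * V ω k)^2)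
          = fun ω => (V ω j * V ω j + ε^2 * (V ω k * V ω k)) + (2*ε) * (V ω j * V ω k) := by
        funext ω; ring
      have i1 : Integrable (fun ω => V ω j * V ω j + ε^2 * (V ω k * V ω k)) μ :=
        (hIVV j j).add ((hIVV k k).const_mul _)
      have i2 : Integrable (fun ω => 2*ε * (V ω j * V ω k)) μ := (hIVV j k).const_mul _
      have i3 : Integrable (fun ω => ε^2 * (V ω k * V ω k)) μ := (hIVV k k).const_mul _
      rw [e, integral_add i1 i2, integral_add (hIVV j j) i3, integral_const_mul,
        integral_const_mul, hε2]
      ring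
    rw [hrhs] at h
    have hlhs : ∑ i, (A i j + ε * A i k)^2
        = ∑ i, (A i j)^2 + 2*ε*(∑ i, A i j * A i k) + ∑ i, (A i k)^2 := by
      rw [Finset.mul_sum, ← Finset.sum_add_distrib, ← Finset.sum_add_distrib]
      refine Finset.sum_congr rfl fun i _ => ?_
      nlinarith [hε2]
    rw [hlhs] at h
    rw [hS]; simp only []
    have e : ∀ m : Fin n, (∑ i, A i m * A i m) = ∑ i, (A i m)^2 := by
      intro m; exact Finset.sum_congr rfl fun i _ => (pow_two _).symm
    rw [e j, e k]
    nlinarith [h]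
  have hSabs : ∀ j k, |S j k| ≤ (S j j + S k k) / 2 := by
    intro j k
    have h1 := hSpm j k 1 (by norm_num)
    have h2 := hSpm j k (-1) (by norm_num)
    rw [abs_le]; constructor <;> linarith
  -- trace bound
  set G : Matrix (Fin n) (Fin n) ℝ := A * Aᵀ with hG
  clear_value G
  have hGapp : ∀ i m, G i m = ∑ j, A i j * A m j := by
    intro i m; rw [hG]; simp [Matrix.mul_apply]
  have hGtr : G.trace = ∑ i, ∑ j, (A i j)^2 := by
    rw [hG]; simp [Matrix.trace, Matrix.diag, Matrix.mul_apply, pow_two]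
  have htrS : ∑ j, S j j = (n:ℝ) - G.trace := by
    rw [hGtr, hS]
    simp only []
    rw [Finset.sum_sub_distrib, ← Finset.mul_sum, hsum1, mul_one]
    congr 1
    rw [Finset.sum_comm]
    refine Finset.sum_congr rfl fun i _ => Finset.sum_congr rfl fun j _ => (pow_two _).symm
  have htrG : G.trace ≤ (n:ℝ) := by
    have h : ∀ j, 0 ≤ S j j := hSjj
    have := Finset.sum_nonneg (fun j (_ : j ∈ univ) => h j)
    rw [htrS] at this
    linarith
  -- |A i0 j| ≤ n
  have habsA : ∀ j, |A i0 j| ≤ (n:ℝ) := by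
    intro j
    have h1 : (A i0 j)^2 ≤ G.trace := by
      rw [hGtr]
      calc (A i0 j)^2 ≤ ∑ k, (A i0 k)^2 :=
            Finset.single_le_sum (f := fun k => (A i0 k)^2) (fun k _ => sq_nonneg _) (mem_univ j)
      _ ≤ ∑ i, ∑ k, (A i k)^2 :=
            Finset.single_le_sum (f := fun i => ∑ k, (A i k)^2)
              (fun i _ => Finset.sum_nonneg fun k _ => sq_nonneg _) (mem_univ i0)
    have h2 : (A i0 j)^2 ≤ (n:ℝ)^2 := by nlinarith
    nlinarith [sq_abs (A i0 j), abs_nonneg (A i0 j)]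
  -- R bound
  set R : ℝ := ∑ j, ∑ k, A i0 j * A i0 k * S j k with hR
  have hRbound : R ≤ (n:ℝ)^3 * ((n:ℝ) - G.trace) := by
    have hterm : ∀ j k, A i0 j * A i0 k * S j k ≤ (n:ℝ)^2 * ((S j j + S k k)/2) := by
      intro j k
      have hd2 : (0:ℝ) ≤ (S j j + S k k)/2 := by
        have := hSjj j; have := hSjj k; linarith
      calc A i0 j * A i0 k * S j k ≤ |A i0 j * A i0 k * S j k| := le_abs_self _
      _ = |A i0 j| * |A i0 k| * |S j k| := by rw [abs_mul, abs_mul]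
      _ ≤ (n:ℝ) * (n:ℝ) * ((S j j + S k k)/2) := by
          refine mul_le_mul (mul_le_mul (habsA j) (habsA k) (abs_nonneg _) hn0.le)
            (hSabs j k) (abs_nonneg _) (by positivity)
      _ = (n:ℝ)^2 * ((S j j + S k k)/2) := by ring
    calc R ≤ ∑ j, ∑ k, (n:ℝ)^2 * ((S j j + S k k)/2) :=
          Finset.sum_le_sum fun j _ => Finset.sum_le_sum fun k _ => hterm j k
    _ = (n:ℝ)^3 * ((n:ℝ) - G.trace) := by
        rw [← htrS]
        have e1 : ∀ j : Fin n, ∑ k, (n:ℝ)^2 * ((S j j + S k k)/2)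
            = (n:ℝ)^2 * (((n:ℝ) * S j j + ∑ k, S k k)/2) := by
          intro j
          rw [← Finset.mul_sum]
          congr 1
          rw [← Finset.sum_div, Finset.sum_add_distrib, Finset.sum_const, card_univ,
            Fintype.card_fin, nsmul_eq_mul]
        rw [Finset.sum_congr rfl fun j _ => e1 j, ← Finset.mul_sum]
        have e2 : ∑ j, (((n:ℝ) * S j j + ∑ k, S k k)/2) = (n:ℝ) * ∑ j, S j j := by
          rw [← Finset.sum_div, Finset.sum_add_distrib, ← Finset.mul_sum, Finset.sum_const,
            card_univ, Fintype.card_fin, nsmul_eq_mul]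
          ring
        rw [e2]; ring
  -- beta decomposition
  have hbeta : (n:ℝ) * ∫ ω, f ω * f ω ∂μ = (∑ i, (G i i0)^2) + R := by
    rw [hff]
    have e1 : (n:ℝ) * (∑ j, ∑ k, A i0 j * A i0 k * ∫ ω, V ω j * V ω k ∂μ)
        = ∑ j, ∑ k, A i0 j * A i0 k * ((∑ i, A i j * A i k) + S j k) := by
      rw [Finset.mul_sum]
      refine Finset.sum_congr rfl fun j _ => ?_
      rw [Finset.mul_sum]
      refine Finset.sum_congr rfl fun k _ => ?_
      rw [hS]; simp only []; ring
    rw [e1]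
    have e2 : ∑ j, ∑ k, A i0 j * A i0 k * ((∑ i, A i j * A i k) + S j k)
        = (∑ j, ∑ k, A i0 j * A i0 k * (∑ i, A i j * A i k)) + R := by
      rw [hR, ← Finset.sum_add_distrib]
      refine Finset.sum_congr rfl fun j _ => ?_
      rw [← Finset.sum_add_distrib]
      exact Finset.sum_congr rfl fun k _ => by ring
    rw [e2]
    congr 1
    calc ∑ j, ∑ k, A i0 j * A i0 k * (∑ i, A i j * A i k)
        = ∑ j, ∑ k, ∑ i, (A i j * A i0 j) * (A i k * A i0 k) := by
          refine Finset.sum_congr rfl fun j _ => Finset.sum_congr rfl fun k _ => ?_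
          rw [Finset.mul_sum]
          exact Finset.sum_congr rfl fun i _ => by ring
    _ = ∑ i, ∑ j, ∑ k, (A i j * A i0 j) * (A i k * A i0 k) := by
          rw [Finset.sum_congr rfl fun j (_ : j ∈ univ) => Finset.sum_comm]
          exact Finset.sum_comm
    _ = ∑ i, (∑ j, A i j * A i0 j) * (∑ k, A i k * A i0 k) := by
          refine Finset.sum_congr rfl fun i _ => ?_
          rw [Finset.sum_mul_sum]
    _ = ∑ i, (G i i0)^2 := by
          refine Finset.sum_congr rfl fun i _ => ?_
          rw [hGapp, pow_two]
  -- Frobenius inequality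
  have htG : G i0 i0 = t := by
    rw [hGapp, ht]
    exact Finset.sum_congr rfl fun j _ => (pow_two _).symm
  have hfro : 1 - 2*t + ∑ i, (G i i0)^2 ≤ ∑ i, ∑ m, ((if i = m then (1:ℝ) else 0) - G i m)^2 := by
    have e0 : ∀ i : Fin n, ((if i = i0 then (1:ℝ) else 0) - G i i0)^2
        = ((if i = i0 then (1:ℝ) else 0) - (if i = i0 then 2 * G i i0 else 0)) + (G i i0)^2 := by
      intro i; by_cases h : i = i0 <;> simp [h] <;> ring
    have e1 : ∑ i, ((if i = i0 then (1:ℝ) else 0) - G i i0)^2 = 1 - 2*t + ∑ i, (G i i0)^2 := by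
      rw [Finset.sum_congr rfl fun i _ => e0 i, Finset.sum_add_distrib, Finset.sum_sub_distrib]
      rw [Finset.sum_ite_eq' univ i0 (fun _ => (1:ℝ)),
        Finset.sum_ite_eq' univ i0 (fun i => 2 * G i i0)]
      simp only [mem_univ, if_true]
      rw [htG]
    have e2 : ∑ i, ((if i = i0 then (1:ℝ) else 0) - G i i0)^2
        ≤ ∑ i, ∑ m, ((if i = m then (1:ℝ) else 0) - G i m)^2 :=
      Finset.sum_le_sum fun i _ =>
        Finset.single_le_sum (f := fun m => ((if i = m then (1:ℝ) else 0) - G i m)^2)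
          (fun m _ => sq_nonneg _) (mem_univ i0)
    rw [e1] at e2
    exact e2
  -- apply matrix_key
  have htrG' : (A * Aᵀ).trace ≤ (n:ℝ) := by rw [← hG]; exact htrG
  have hmk := matrix_key n hn A htrG'
  rw [← hG] at hmk
  have hnT : (n:ℝ) * T ≤ 20*((n:ℝ)+1)^4 * (1 - |A.det|) := by
    rw [hTexp, hbeta]
    calc 1 - 2*t + ((∑ i, (G i i0)^2) + R)
        ≤ (∑ i, ∑ m, ((if i = m then (1:ℝ) else 0) - G i m)^2)
            + (n:ℝ)^3*((n:ℝ) - G.trace) := by linarith [hfro, hRbound]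
    _ ≤ 20*((n:ℝ)+1)^4 * (1 - |A.det|) := hmk
  have hKpos : (0:ℝ) < 20*((n:ℝ)+1)^4 := by positivity
  have hTn : T ≤ (n:ℝ) * T := by nlinarith
  have hfin : T ≤ 20*((n:ℝ)+1)^4 * (1 - |A.det|) := le_trans hTn hnT
  have hfinal : (1/(20*((n:ℝ)+1)^4)) * T ≤ 1 - |A.det| := by
    rw [one_div, inv_mul_eq_div, div_le_iff₀ hKpos]
    nlinarith [hfin]
  have hgoal : ∫ ω, (δ i0 ω - (inner ℝ (V ω) E : ℝ))^2 ∂μ = T := by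
    rw [hT]; congr 1; funext ω; rw [hinner ω]
  rw [hgoal]
  linarith [hfinal]
end Main


/-- Measure-theoretic core of Proposition 5.3: for every `n ≥ 1` there is `c₀ = c₀(n) > 0`
such that for any probability space `(Ω,μ)`, any a.e. unit vector field `V : Ω → ℝⁿ`, and
any family `δ₁,…,δₙ` orthonormal for `⟨f,g⟩ = n∫ f·g dμ`, the matrix
`A_{ij} = n∫ δᵢ·Vⱼ dμ` and the vector `E(δ₁) = n∫ δ₁·V dμ` satisfy
`|det A| ≤ 1 − c₀·∫ (δ₁ − ⟨V, E(δ₁)⟩)² dμ`. -/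
theorem abs_det_quantitative (n : ℕ) (hn : 1 ≤ n) :
    ∃ c₀ > (0 : ℝ),
      ∀ (Ω : Type) (_ : MeasurableSpace Ω) (μ : Measure Ω), IsProbabilityMeasure μ →
      ∀ (V : Ω → EuclideanSpace ℝ (Fin n)), Measurable V →
      (∀ᵐ ω ∂μ, ‖V ω‖ = 1) →
      ∀ (δ : Fin n → Ω → ℝ), (∀ i, MemLp (δ i) 2 μ) →
      (∀ i j, (n : ℝ) * ∫ ω, δ i ω * δ j ω ∂μ = if i = j then 1 else 0) →
      ∀ (A : Matrix (Fin n) (Fin n) ℝ),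
        (∀ i j, A i j = (n : ℝ) * ∫ ω, δ i ω * V ω j ∂μ) →
      ∀ (E : EuclideanSpace ℝ (Fin n)),
        E = (n : ℝ) • ∫ ω, δ ⟨0, hn⟩ ω • V ω ∂μ →
      |A.det| ≤ 1 - c₀ * ∫ ω, (δ ⟨0, hn⟩ ω - (inner ℝ (V ω) E : ℝ)) ^ 2 ∂μ := by
  refine ⟨1/(20*((n:ℝ)+1)^4), by positivity, ?_⟩
  intro Ω mΩ μ hμ V hV hV1 δ hδ horth A hA E hE
  haveI := hμ
  exact abs_det_quantitative' n hn V hV hV1 δ hδ horth A hA E hE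
end

section
/- Let H be a real Hilbert space, n ≥ 1 an integer, E an n-dimensional real inner product space, and L : H → E a bounded (continuous) linear map that is surjective. Let K = (ker L)^⊥ be the orthogonal complement of the kernel of L, and let z₁, …, zₙ be an orthonormal basis of K. Then for every orthonormal family y₁, …, yₙ in H, det( (⟨L y_i, L y_j⟩_E)_{i,j=1}^n ) ≤ det( (⟨L z_i, L z_j⟩_E)_{i,j=1}^n ). In other words, among all n-dimensional subspaces Y ⊆ H, the n-dimensional volume expansion (Gram determinant) of the restriction L|_Y is maximized when Y = (ker L)^⊥. -/
open Matrix

lemma gram_posSemidef {F : Type*} [NormedAddCommGroup F] [InnerProductSpace ℝ F]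
    {n : ℕ} (v : Fin n → F) :
    (Matrix.of fun i j => (inner ℝ (v i) (v j) : ℝ)).PosSemidef := by
  refine Matrix.posSemidef_iff_dotProduct_mulVec.mpr ⟨?_, ?_⟩
  · ext i j
    simp [Matrix.conjTranspose_apply, real_inner_comm]
  · intro x
    have h : dotProduct (star x) ((Matrix.of fun i j => (inner ℝ (v i) (v j) : ℝ)) *ᵥ x)
        = (inner ℝ (∑ i, x i • v i) (∑ j, x j • v j) : ℝ) := by
      simp only [dotProduct, Matrix.mulVec, Matrix.of_apply, star_trivial,
        inner_sum, sum_inner, real_inner_smul_left, real_inner_smul_right, Finset.mul_sum]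
      refine Finset.sum_congr rfl fun a _ => Finset.sum_congr rfl fun b _ => ?_
      rw [real_inner_comm (v b) (v a)]; ring
    rw [h]
    exact real_inner_self_nonneg

lemma psd_det_nonneg {n : ℕ} {M : Matrix (Fin n) (Fin n) ℝ} (hM : M.PosSemidef) :
    0 ≤ M.det := by
  rw [hM.1.det_eq_prod_eigenvalues]
  exact Finset.prod_nonneg fun i _ => hM.eigenvalues_nonneg i

lemma psd_det_le_one {n : ℕ} {M : Matrix (Fin n) (Fin n) ℝ} (hM : M.PosSemidef)
    (h1 : (1 - M).PosSemidef) : M.det ≤ 1 := by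
  rw [hM.1.det_eq_prod_eigenvalues]
  refine Finset.prod_le_one (fun i _ => hM.eigenvalues_nonneg i) (fun i _ => ?_)
  have hv := hM.1.eigenvalues_eq i
  set u : Fin n → ℝ := (WithLp.equiv 2 (Fin n → ℝ)) (hM.1.eigenvectorBasis i) with hu
  have hnorm : dotProduct (star u) u = 1 := by
    have h3 : ‖hM.1.eigenvectorBasis i‖ = 1 := hM.1.eigenvectorBasis.orthonormal.1 i
    have h4 : (inner ℝ (hM.1.eigenvectorBasis i) (hM.1.eigenvectorBasis i) : ℝ) = 1 := by
      rw [real_inner_self_eq_norm_sq, h3]; norm_num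
    rw [EuclideanSpace.inner_eq_star_dotProduct] at h4
    simpa [hu] using h4
  have h2 := h1.dotProduct_mulVec_nonneg u
  rw [Matrix.sub_mulVec, dotProduct_sub, Matrix.one_mulVec, hnorm, sub_nonneg] at h2
  calc hM.1.eigenvalues i = dotProduct (star u) (M *ᵥ u) := by simpa [hu] using hv
    _ ≤ 1 := h2



/-- The claim after Definition 3.12 of the paper: for a surjective bounded linear map `L`
from a real Hilbert space `H` onto an `n`-dimensional inner product space `E`, the Gram
determinant of `L` restricted to an `n`-dimensional subspace (computed on an orthonormal
basis) is maximized on `(ker L)ᗮ`. -/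
theorem gram_det_maximized_on_ker_orthogonal
    {H : Type*} [NormedAddCommGroup H] [InnerProductSpace ℝ H] [CompleteSpace H]
    {E : Type*} [NormedAddCommGroup E] [InnerProductSpace ℝ E] [FiniteDimensional ℝ E]
    (n : ℕ) (hn : 1 ≤ n) (hE : Module.finrank ℝ E = n)
    (L : H →L[ℝ] E) (hL : Function.Surjective L)
    (z : Fin n → H) (hz : Orthonormal ℝ z)
    (hzK : ∀ i, z i ∈ (LinearMap.ker (L : H →ₗ[ℝ] E))ᗮ)
    (hspan : Submodule.span ℝ (Set.range z) = (LinearMap.ker (L : H →ₗ[ℝ] E))ᗮ)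
    (y : Fin n → H) (hy : Orthonormal ℝ y) :
    Matrix.det (Matrix.of fun i j => (inner ℝ (L (y i)) (L (y j)) : ℝ)) ≤
      Matrix.det (Matrix.of fun i j => (inner ℝ (L (z i)) (L (z j)) : ℝ)) := by
  classical
  set c : Fin n → Fin n → ℝ := fun i k => (inner ℝ (z k) (y i) : ℝ) with hc
  set w : Fin n → H := fun i => ∑ k, c i k • z k with hw
  -- the kernel is closed so K := (ker L)ᗮ satisfies Kᗮ = ker L
  haveI : CompleteSpace (LinearMap.ker (L : H →ₗ[ℝ] E)) :=
    (ContinuousLinearMap.isClosed_ker L).completeSpace_coe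
  have hker : ((LinearMap.ker (L : H →ₗ[ℝ] E))ᗮ)ᗮ = LinearMap.ker (L : H →ₗ[ℝ] E) :=
    Submodule.orthogonal_orthogonal _
  -- y i - w i ∈ ker L
  have hmem : ∀ i, y i - w i ∈ LinearMap.ker (L : H →ₗ[ℝ] E) := by
    intro i
    rw [← hker, ← hspan, Submodule.mem_orthogonal]
    intro u hu
    induction hu using Submodule.span_induction with
    | mem u hu =>
        obtain ⟨j, rfl⟩ := hu
        rw [inner_sub_right]
        have : (inner ℝ (z j) (w i) : ℝ) = c i j := hz.inner_right_fintype (c i) j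
        rw [this]
        simp [hc]
    | zero => simp
    | add a b _ _ ha hb => rw [inner_add_left, ha, hb, add_zero]
    | smul r a _ ha => rw [inner_smul_left, ha, mul_zero]
  have hLy : ∀ i, L (y i) = ∑ k, c i k • L (z k) := by
    intro i
    have h0 : L (y i - w i) = 0 := hmem i
    have : L (y i) = L (w i) := by
      rwa [map_sub, sub_eq_zero] at h0
    rw [this, hw]
    simp
  set C : Matrix (Fin n) (Fin n) ℝ := Matrix.of c with hC
  set G : Matrix (Fin n) (Fin n) ℝ := Matrix.of (fun k l => (inner ℝ (L (z k)) (L (z l)) : ℝ))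
    with hG
  -- inner products with w
  have hzw : ∀ k j, (inner ℝ (z k) (w j) : ℝ) = c j k := fun k j => hz.inner_right_fintype (c j) k
  have hyz : ∀ i k, (inner ℝ (y i) (z k) : ℝ) = c i k := fun i k => (real_inner_comm (y i) (z k)).symm
  have hww : ∀ i j, (inner ℝ (w i) (w j) : ℝ) = ∑ k, c i k * c j k := by
    intro i j
    rw [hw]
    simp only [sum_inner, real_inner_smul_left]
    exact Finset.sum_congr rfl fun k _ => by rw [hzw k j]
  have hyw : ∀ i j, (inner ℝ (y i) (w j) : ℝ) = ∑ k, c i k * c j k := by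
    intro i j
    rw [hw]
    simp only [inner_sum, real_inner_smul_right]
    exact Finset.sum_congr rfl fun k _ => by rw [hyz i k]; ring
  -- the Gram matrix of y equals C * G * Cᵀ
  have hA : (Matrix.of fun i j => (inner ℝ (L (y i)) (L (y j)) : ℝ)) = C * G * C.transpose := by
    ext i j
    rw [Matrix.of_apply, hLy i, hLy j]
    simp only [Matrix.mul_apply, Matrix.transpose_apply, inner_sum, sum_inner,
      real_inner_smul_left, real_inner_smul_right, Finset.sum_mul, Finset.mul_sum]
    exact Finset.sum_congr rfl fun l _ => Finset.sum_congr rfl fun k _ => by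
      simp only [hC, hG, Matrix.of_apply]; ring
  -- C * Cᵀ is the Gram matrix of the w's
  have hCCt : C * C.transpose = Matrix.of (fun i j => (inner ℝ (w i) (w j) : ℝ)) := by
    ext i j
    rw [Matrix.of_apply, hww i j]
    simp only [Matrix.mul_apply, Matrix.transpose_apply, hC, Matrix.of_apply]
  -- 1 - C * Cᵀ is the Gram matrix of the y i - w i
  have hsub : (1 : Matrix (Fin n) (Fin n) ℝ) - C * C.transpose
      = Matrix.of (fun i j => (inner ℝ (y i - w i) (y j - w j) : ℝ)) := by
    ext i j
    have h1 : (inner ℝ (y i) (y j) : ℝ) = if i = j then 1 else 0 :=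
      orthonormal_iff_ite.mp hy i j
    have h2 : (inner ℝ (w i) (y j) : ℝ) = ∑ k, c i k * c j k := by
      rw [real_inner_comm, hyw j i]
      exact Finset.sum_congr rfl fun k _ => mul_comm _ _
    have expand : (inner ℝ (y i - w i) (y j - w j) : ℝ)
        = (if i = j then 1 else 0) - ∑ k, c i k * c j k := by
      rw [inner_sub_left, inner_sub_right, inner_sub_right, h1, hyw i j, h2, hww i j]
      ring
    rw [Matrix.of_apply, expand, Matrix.sub_apply, Matrix.one_apply, hCCt, Matrix.of_apply,
      hww i j]
  have hMle : (C * C.transpose).det ≤ 1 := by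
    refine psd_det_le_one ?_ ?_
    · rw [hCCt]; exact gram_posSemidef w
    · rw [hsub]; exact gram_posSemidef (fun i => y i - w i)
  have hGnn : 0 ≤ G.det := psd_det_nonneg (gram_posSemidef (fun k => L (z k)))
  rw [hA, Matrix.det_mul, Matrix.det_mul, Matrix.det_transpose]
  calc C.det * G.det * C.det = (C * C.transpose).det * G.det := by
        rw [Matrix.det_mul, Matrix.det_transpose]; ring
    _ ≤ 1 * G.det := mul_le_mul_of_nonneg_right hMle hGnn
    _ = G.det := one_mul _
end
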